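/- Let V have dimension 2p with p ≥ 1, let U have dimension p, let α : V × V → U be a symmetric bilinear map, and let β(X,Y) = (α(X,Y)+α(JX,JY), α(X,JY)-α(JX,Y)). Assume β is flat with respect to the signature-(p,p) bilinear form on U × U and that its kernel N(β) = {Y ∈ V : β(X,Y)=0 for all X} is zero. Then there exists Z₀ ∈ V such that the kernel of the linear map B_{Z₀} : V → U × U, B_{Z₀}Y = β(Z₀,Y), has dimension exactly 2(p-1). -/

import Mathlib

open Module Submodule LinearMap RealInnerProductSpace

namespace Stmt11

/- ### Generic dimension lemmas -/

variable {E₀ : Type*} [NormedAddCommGroup E₀] [InnerProductSpace ℝ E₀] [FiniteDimensional ℝ E₀]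
variable {ι : Type*} [DecidableEq ι]

lemma sum_finrank_of_orth (S : Finset ι) (R : ι → Submodule ℝ E₀)
    (horth : ∀ v ∈ S, ∀ w ∈ S, v ≠ w → R v ≤ (R w)ᗮ) :
    ∑ v ∈ S, finrank ℝ ↥(R v) = finrank ℝ ↥(S.sup R) := by
  induction S using Finset.induction_on with
  | empty => simp; rw [Finset.sup_empty, finrank_bot]
  | @insert a S ha IH =>
    have horth' : ∀ v ∈ S, ∀ w ∈ S, v ≠ w → R v ≤ (R w)ᗮ := by
      intro v hv w hw hvw
      exact horth v (Finset.mem_insert_of_mem hv) w (Finset.mem_insert_of_mem hw) hvw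
    have hle : S.sup R ≤ (R a)ᗮ := by
      refine Finset.sup_le fun v hv => ?_
      exact horth v (Finset.mem_insert_of_mem hv) a (Finset.mem_insert_self a S)
        (fun h => ha (h ▸ hv))
    have hinf : R a ⊓ S.sup R = ⊥ := by
      refine le_bot_iff.mp fun x hx => ?_
      have h1 : x ∈ R a := hx.1
      have h2 : x ∈ (R a)ᗮ := hle hx.2
      have := Submodule.inner_right_of_mem_orthogonal h1 h2
      simpa [inner_self_eq_zero] using this
    rw [Finset.sum_insert ha, Finset.sup_insert, IH horth']
    have := Submodule.finrank_sup_add_finrank_inf_eq (R a) (S.sup R)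
    rw [hinf] at this
    simp only [finrank_bot, add_zero] at this
    omega

lemma finrank_le_inf_ker_single {V' E' : Type*} [AddCommGroup V'] [Module ℝ V']
    [FiniteDimensional ℝ V'] [AddCommGroup E'] [Module ℝ E']
    (A : Submodule ℝ V') (g : V' →ₗ[ℝ] E') :
    finrank ℝ ↥A ≤ finrank ℝ ↥(A ⊓ ker g) + finrank ℝ ↥(range g) := by
  classical
  have h1 := LinearMap.finrank_range_add_finrank_ker (g.domRestrict A)
  have h2 : finrank ℝ ↥(range (g.domRestrict A)) ≤ finrank ℝ ↥(range g) := by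
    apply Submodule.finrank_mono
    rintro x ⟨y, rfl⟩
    exact ⟨(y : V'), rfl⟩
  have h3 : finrank ℝ ↥(ker (g.domRestrict A)) = finrank ℝ ↥(A ⊓ ker g) := by
    have hker : ker (g.domRestrict A) = comap A.subtype (ker g) := by
      ext x; simp [LinearMap.mem_ker]
    rw [hker]
    have hmap : map A.subtype (comap A.subtype (ker g)) = A ⊓ ker g := by
      rw [Submodule.map_comap_subtype]
    rw [← hmap]
    exact (Submodule.equivMapOfInjective A.subtype (Submodule.injective_subtype A)
      (comap A.subtype (ker g))).finrank_eq
  omega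

lemma finrank_le_sum_inf_ker {V' E' : Type*} [AddCommGroup V'] [Module ℝ V']
    [FiniteDimensional ℝ V'] [AddCommGroup E'] [Module ℝ E']
    (S : Finset ι) (f : ι → V' →ₗ[ℝ] E') :
    finrank ℝ V' ≤ finrank ℝ ↥(S.inf fun v => ker (f v)) +
      ∑ v ∈ S, finrank ℝ ↥(range (f v)) := by
  induction S using Finset.induction_on with
  | empty => simp [Finset.inf_empty]; exact le_of_eq (by rw [Finset.inf_empty, finrank_top])
  | @insert a S ha IH =>
    rw [Finset.inf_insert, Finset.sum_insert ha]
    have key := finrank_le_inf_ker_single (S.inf fun v => ker (f v)) (f a)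
    rw [inf_comm] at key
    omega

/- ### The eigenvector contradiction -/

lemma eig_contra {M E'' : Type*} [AddCommGroup M] [Module ℝ M] [FiniteDimensional ℝ M]
    [AddCommGroup E''] [Module ℝ E''] [FiniteDimensional ℝ E'']
    (j : M →ₗ[ℝ] M) (hj : ∀ y, j (j y) = -y)
    (jE : E'' →ₗ[ℝ] E'')
    (F' : M →ₗ[ℝ] M →ₗ[ℝ] E'')
    (h1 : ∀ x y, F' x (j y) = -jE (F' x y))
    (h2 : ∀ x y, F' (j x) y = jE (F' x y))
    (h3 : ∀ x : M, x ≠ 0 → ∀ y : M, F' x y = 0 → y = 0)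
    (h4 : finrank ℝ E'' ≤ finrank ℝ M)
    (h5 : 3 ≤ finrank ℝ M) : False := by
  classical
  haveI : Nontrivial M := by
    apply Module.nontrivial_of_finrank_pos (R := ℝ) (M := M)
    omega
  letI : SMul ℂ M := ⟨fun z y => z.re • y + z.im • j y⟩
  have smul_def : ∀ (z : ℂ) (y : M), z • y = z.re • y + z.im • j y := fun _ _ => rfl
  letI : Module ℂ M :=
    { smul := fun z y => z.re • y + z.im • j y
      one_smul := fun y => by simp [smul_def]
      mul_smul := fun z w y => by
        simp only [smul_def, Complex.mul_re, Complex.mul_im, map_add, map_smul, hj,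
          smul_add, smul_neg, smul_smul]
        module
      smul_zero := fun z => by simp [smul_def]
      smul_add := fun z y₁ y₂ => by simp [smul_def]; module
      add_smul := fun z w y => by
        simp only [smul_def, Complex.add_re, Complex.add_im, add_smul]; module
      zero_smul := fun y => by simp [smul_def] }
  haveI : IsScalarTower ℝ ℂ M := by
    constructor
    intro r z y
    simp only [smul_def, Complex.smul_re, Complex.smul_im, smul_eq_mul, smul_add, smul_smul]
  haveI : Module.Finite ℂ M := Module.Finite.of_restrictScalars_finite ℝ ℂ M
  have hrank : 2 * finrank ℂ M = finrank ℝ M := by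
    have := Module.finrank_mul_finrank ℝ ℂ M
    rwa [Complex.finrank_real_complex] at this
  have hd : 2 ≤ finrank ℂ M := by omega
  obtain ⟨v₀, hv₀⟩ := exists_ne (0 : M)
  have hspan : (Submodule.span ℂ {v₀} : Submodule ℂ M) ≠ ⊤ := by
    intro h
    have h1' : finrank ℂ M = 1 := by
      rw [← finrank_top ℂ M, ← h]
      exact finrank_span_singleton hv₀
    omega
  obtain ⟨x₂, hx₂⟩ : ∃ x₂ : M, x₂ ∉ (Submodule.span ℂ {v₀} : Submodule ℂ M) := by
    by_contra h
    push_neg at h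
    exact hspan (Submodule.eq_top_iff'.mpr h)
  set B₀ : M →ₗ[ℝ] E'' := F' v₀ with hB₀
  have hinj : Function.Injective B₀ := by
    rw [← LinearMap.ker_eq_bot]
    refine (Submodule.eq_bot_iff _).mpr fun y hy => h3 v₀ hv₀ y hy
  have hsurj : Function.Surjective B₀ := by
    rw [← LinearMap.range_eq_top]
    apply Submodule.eq_top_of_finrank_eq
    have := LinearMap.finrank_range_add_finrank_ker B₀
    rw [LinearMap.ker_eq_bot.mpr hinj, finrank_bot, add_zero] at this
    have hle : finrank ℝ ↥(range B₀) ≤ finrank ℝ E'' := Submodule.finrank_le _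
    omega
  let B : M ≃ₗ[ℝ] E'' := LinearEquiv.ofBijective B₀ ⟨hinj, hsurj⟩
  have hBj : ∀ z : M, B (j z) = -jE (B z) := fun z => h1 v₀ z
  have hBj' : ∀ w : E'', B.symm (-jE w) = j (B.symm w) := by
    intro w
    apply B.injective
    rw [B.apply_symm_apply, hBj, B.apply_symm_apply]
  set T : M →ₗ[ℝ] M := B.symm.toLinearMap ∘ₗ F' x₂ with hT
  have hTj : ∀ y, T (j y) = j (T y) := by
    intro y
    show B.symm (F' x₂ (j y)) = j (B.symm (F' x₂ y))
    rw [h1, hBj']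
  have hTc : ∀ (z : ℂ) (y : M), T (z • y) = z • T y := by
    intro z y
    rw [smul_def, smul_def, map_add, map_smul, map_smul, hTj]
  let Tc : Module.End ℂ M :=
    { toFun := T
      map_add' := map_add T
      map_smul' := hTc }
  obtain ⟨μ, hμ⟩ := Module.End.exists_eigenvalue Tc
  obtain ⟨y, hy⟩ := hμ.exists_hasEigenvector
  have hyv : Tc y = μ • y := hy.apply_eq_smul
  have hy0 : y ≠ 0 := hy.right
  set x' : M := x₂ - (starRingEnd ℂ μ) • v₀ with hx'
  have hx'0 : x' ≠ 0 := by
    intro h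
    apply hx₂
    have hx2eq : x₂ = (starRingEnd ℂ μ) • v₀ := sub_eq_zero.mp h
    rw [hx2eq]
    exact Submodule.smul_mem _ _ (Submodule.mem_span_singleton_self v₀)
  have hFx' : F' x' y = 0 := by
    have hsm : ((starRingEnd ℂ μ) • v₀ : M) = μ.re • v₀ + (-μ.im) • j v₀ := by
      rw [smul_def]
      simp [Complex.conj_re, Complex.conj_im]
    have hx2y : F' x₂ y = μ.re • B₀ y - μ.im • jE (B₀ y) := by
      have h5' : F' x₂ y = B (T y) := by
        show F' x₂ y = B (B.symm (F' x₂ y))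
        rw [B.apply_symm_apply]
      rw [h5']
      have hTy : T y = Tc y := rfl
      rw [hTy, hyv, smul_def, map_add, map_smul, map_smul, hBj]
      show μ.re • B₀ y + μ.im • (-jE (B₀ y)) = μ.re • B₀ y - μ.im • jE (B₀ y)
      rw [smul_neg]
      abel
    rw [hx', map_sub, LinearMap.sub_apply, hsm, map_add, LinearMap.add_apply,
      map_smul, map_smul, LinearMap.smul_apply, LinearMap.smul_apply, h2, hx2y]
    module
  exact hy0 (h3 x' hx'0 y hFx')

/- ### the bilinear map into the L² product, and the product complex structure -/

section Core
variable {V U : Type*} [AddCommGroup V] [Module ℝ V]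
  [NormedAddCommGroup U] [InnerProductSpace ℝ U]

noncomputable def G (β : V →ₗ[ℝ] V →ₗ[ℝ] (U × U)) :
    V →ₗ[ℝ] V →ₗ[ℝ] WithLp 2 (U × U) :=
  β.compr₂ (WithLp.linearEquiv 2 ℝ (U × U)).symm.toLinearMap

variable (β : V →ₗ[ℝ] V →ₗ[ℝ] (U × U))

lemma G_fst (X Y : V) : (G β X Y).fst = (β X Y).1 := rfl
lemma G_snd (X Y : V) : (G β X Y).snd = (β X Y).2 := rfl

lemma G_inner (X Y Z T : V) :
    ⟪G β X Y, G β Z T⟫ = ⟪(β X Y).1, (β Z T).1⟫ + ⟪(β X Y).2, (β Z T).2⟫ := rfl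

lemma G_eq_zero_iff (X Y : V) : G β X Y = 0 ↔ β X Y = 0 := by
  constructor
  · intro h
    have h1 : (β X Y).1 = 0 := congrArg (fun w => w.fst) h
    have h2 : (β X Y).2 = 0 := congrArg (fun w => w.snd) h
    exact Prod.ext h1 h2
  · intro h
    have hG : G β X Y = (WithLp.equiv 2 (U × U)).symm (β X Y) := rfl
    rw [hG, h]
    rfl

noncomputable def jW : WithLp 2 (U × U) →ₗ[ℝ] WithLp 2 (U × U) :=
  (WithLp.linearEquiv 2 ℝ (U × U)).symm.toLinearMap ∘ₗ
    ((LinearMap.snd ℝ U U).prod (-(LinearMap.fst ℝ U U))) ∘ₗ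
      (WithLp.linearEquiv 2 ℝ (U × U)).toLinearMap

lemma jW_fst (x : WithLp 2 (U × U)) : (jW x).fst = x.snd := rfl
lemma jW_snd (x : WithLp 2 (U × U)) : (jW x).snd = -x.fst := rfl

lemma ext_E (x y : WithLp 2 (U × U)) (h1 : x.fst = y.fst) (h2 : x.snd = y.snd) : x = y :=
  WithLp.ofLp_injective 2 (Prod.ext h1 h2)

lemma jW_jW (x : WithLp 2 (U × U)) : jW (jW x) = -x := by
  apply ext_E <;> simp [jW_fst, jW_snd]

lemma jW_inner (x y : WithLp 2 (U × U)) : ⟪jW x, jW y⟫ = ⟪x, y⟫ := by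
  show ⟪(jW x).fst, (jW y).fst⟫ + ⟪(jW x).snd, (jW y).snd⟫ = ⟪x.fst, y.fst⟫ + ⟪x.snd, y.snd⟫
  rw [jW_fst, jW_fst, jW_snd, jW_snd, inner_neg_neg]
  ring

end Core

end Stmt11

open Stmt11

set_option maxHeartbeats 4000000 in
/-- (Fact 2) If `dim V = 2p`, `p ≥ 1`, `β` is flat and `N(β) = 0`, then there is
`Z₀ ∈ V` with `dim ker B_{Z₀} = 2(p-1)`. -/
theorem stmt_11
    {V U : Type*} [AddCommGroup V] [Module ℝ V] [FiniteDimensional ℝ V]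
    [NormedAddCommGroup U] [InnerProductSpace ℝ U] [FiniteDimensional ℝ U]
    (p : ℕ) (hp : 1 ≤ p) (hV : finrank ℝ V = 2 * p) (hU : finrank ℝ U = p)
    (J : V →ₗ[ℝ] V) (hJ : ∀ v : V, J (J v) = -v)
    (α : V →ₗ[ℝ] V →ₗ[ℝ] U) (hα : ∀ X Y : V, α X Y = α Y X)
    (β : V →ₗ[ℝ] V →ₗ[ℝ] (U × U))
    (hβ : ∀ X Y : V, β X Y = (α X Y + α (J X) (J Y), α X (J Y) - α (J X) Y))
    (hflat : ∀ X Y Z T : V,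
      ⟪(β X Y).1, (β Z T).1⟫ - ⟪(β X Y).2, (β Z T).2⟫ =
        ⟪(β X T).1, (β Z Y).1⟫ - ⟪(β X T).2, (β Z Y).2⟫)
    (hker : (⨅ X : V, LinearMap.ker (β X)) = ⊥) :
    ∃ Z₀ : V, finrank ℝ ↥(LinearMap.ker (β Z₀)) = 2 * (p - 1) := by
  classical
  haveI : FiniteDimensional ℝ (U × U) := by infer_instance
  haveI hEfd : FiniteDimensional ℝ (WithLp 2 (U × U)) :=
    (WithLp.linearEquiv 2 ℝ (U × U)).symm.finiteDimensional
  have hE : finrank ℝ (WithLp 2 (U × U)) = 2 * p := by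
    rw [(WithLp.linearEquiv 2 ℝ (U × U)).finrank_eq, Module.finrank_prod, hU]
    ring
  -- conjugation symmetry of β
  have hP3f : ∀ X Y : V, (β Y X).1 = (β X Y).1 := by
    intro X Y; rw [hβ, hβ]
    simp only
    rw [hα Y X, hα (J Y) (J X)]
  have hP3s : ∀ X Y : V, (β Y X).2 = -(β X Y).2 := by
    intro X Y; rw [hβ, hβ]
    simp only
    rw [hα Y (J X), hα (J Y) X]
    abel
  -- positive flatness
  have hFP : ∀ X Y Z T : V, ⟪G β X Y, G β Z T⟫ = ⟪G β X Z, G β Y T⟫ := by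
    intro X Y Z T
    rw [G_inner, G_inner]
    have h := hflat X Y T Z
    rw [hP3f Z T, hP3s Z T, hP3f Y T, hP3s Y T, inner_neg_right, inner_neg_right] at h
    linarith
  have hNorm : ∀ X Y : V, ⟪G β X Y, G β X Y⟫ = ⟪G β X X, G β Y Y⟫ := fun X Y => hFP X Y X Y
  have hzero : ∀ v w : V, G β v w = 0 ↔ ⟪G β v v, G β w w⟫ = 0 := by
    intro v w
    rw [← hNorm, inner_self_eq_zero]
  have hsymm0 : ∀ v w : V, G β v w = 0 → G β w v = 0 := by
    intro v w h
    rw [hzero, real_inner_comm, ← hzero v w]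
    exact h
  have hδ0 : ∀ Y : V, G β Y Y = 0 → Y = 0 := by
    intro Y h
    have hall : ∀ X : V, β X Y = 0 := by
      intro X
      rw [← G_eq_zero_iff, hzero]
      rw [h, inner_zero_right]
    have : Y ∈ (⨅ X : V, LinearMap.ker (β X)) := by
      simp only [Submodule.mem_iInf, LinearMap.mem_ker]
      exact hall
    rw [hker] at this
    simpa using this
  have horthG : ∀ v w : V, G β v w = 0 → ∀ Y T : V, ⟪G β v Y, G β w T⟫ = 0 := by
    intro v w h Y T
    rw [hFP v Y w T, h, inner_zero_left]
  -- J identities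
  have hJright : ∀ X Y : V, G β X (J Y) = jW (G β X Y) := by
    intro X Y
    apply ext_E
    · rw [jW_fst, G_fst, G_snd, hβ, hβ]
      simp only
      rw [hJ]
      rw [map_neg]
      abel
    · rw [jW_snd, G_snd, G_fst, hβ, hβ]
      simp only
      rw [hJ, map_neg]
      abel
  have hJleft : ∀ X Y : V, G β (J X) Y = -jW (G β X Y) := by
    intro X Y
    have h1 : G β (J X) (J (J Y)) = jW (G β (J X) (J Y)) := hJright (J X) (J Y)
    -- easier: direct component computation
    apply ext_E
    · show (β (J X) Y).1 = -(jW (G β X Y)).fst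
      rw [jW_fst, G_snd, hβ, hβ]
      simp only
      rw [hJ]
      rw [map_neg α X]
      simp only [LinearMap.neg_apply]
      abel
    · show (β (J X) Y).2 = -(jW (G β X Y)).snd
      rw [jW_snd, G_fst, hβ, hβ]
      simp only
      rw [hJ, map_neg α X]
      simp only [LinearMap.neg_apply]
      abel
  -- good systems
  have hne : Nontrivial V := by
    apply Module.nontrivial_of_finrank_pos (R := ℝ) (M := V)
    omega
  set Good : Finset V → Prop :=
    fun S => (0 : V) ∉ S ∧ ∀ v ∈ S, ∀ w ∈ S, v ≠ w → G β v w = 0 with hGoodDef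
  have horthR : ∀ S : Finset V, Good S → ∀ v ∈ S, ∀ w ∈ S, v ≠ w →
      range (G β v) ≤ (range (G β w))ᗮ := by
    intro S hS v hv w hw hvw
    rintro x ⟨Y, rfl⟩
    rw [Submodule.mem_orthogonal]
    rintro u ⟨T, rfl⟩
    exact horthG w v (hS.2 w hw v hv (Ne.symm hvw)) T Y
  have hrank1 : ∀ v : V, v ≠ 0 → 1 ≤ finrank ℝ ↥(range (G β v)) := by
    intro v hv
    by_contra h
    push_neg at h
    interval_cases h' : finrank ℝ ↥(range (G β v))
    have hbot : range (G β v) = ⊥ := Submodule.finrank_eq_zero.mp h'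
    have : G β v v = 0 := by
      have : G β v v ∈ range (G β v) := ⟨v, rfl⟩
      rw [hbot] at this
      simpa using this
    exact hv (hδ0 v this)
  have hboundsum : ∀ S : Finset V, Good S →
      ∑ v ∈ S, finrank ℝ ↥(range (G β v)) ≤ 2 * p := by
    intro S hS
    rw [sum_finrank_of_orth S _ (horthR S hS)]
    calc finrank ℝ ↥(S.sup fun v => range (G β v)) ≤ finrank ℝ (WithLp 2 (U × U)) :=
          Submodule.finrank_le _
      _ = 2 * p := hE
  have hbound : ∀ S : Finset V, Good S → S.card ≤ 2 * p := by
    intro S hS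
    calc S.card = ∑ _v ∈ S, 1 := by simp
      _ ≤ ∑ v ∈ S, finrank ℝ ↥(range (G β v)) := by
          apply Finset.sum_le_sum
          intro v hv
          exact hrank1 v (fun h => hS.1 (h ▸ hv))
      _ ≤ 2 * p := hboundsum S hS
  -- maximal good system
  set Pred : ℕ → Prop := fun n => ∃ S : Finset V, Good S ∧ S.card = n with hPredDef
  letI : DecidablePred Pred := Classical.decPred _
  have hP1 : Pred 1 := by
    obtain ⟨v, hv⟩ := exists_ne (0 : V)
    refine ⟨{v}, ⟨?_, ?_⟩, by simp⟩
    · simp [Ne.symm hv]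
    · intro a ha b hb hab
      rw [Finset.mem_singleton] at ha hb
      exact absurd (ha.trans hb.symm) hab
  have hk1 : 1 ≤ Nat.findGreatest Pred (2 * p) := Nat.le_findGreatest (by omega) hP1
  have hkP : Pred (Nat.findGreatest Pred (2 * p)) := by
    have := Nat.findGreatest_spec (P := Pred) (n := 2 * p) (m := 1) (by omega) hP1
    exact this
  obtain ⟨S, hGoodS, hcardS⟩ := hkP
  have hmax : ∀ S' : Finset V, Good S' → S'.card ≤ S.card := by
    intro S' hS'
    by_contra h
    push_neg at h
    rw [hcardS] at h
    exact Nat.findGreatest_is_greatest h (hbound S' hS') ⟨S', hS', rfl⟩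
  -- the total kernel of S is ⊥
  have hKbot : (S.inf fun v => ker (G β v)) = ⊥ := by
    by_contra h
    obtain ⟨w, hwmem, hw0⟩ := Submodule.exists_mem_ne_zero_of_ne_bot h
    have hwker : ∀ v ∈ S, G β v w = 0 := by
      intro v hv
      have := (Submodule.mem_finsetInf.mp hwmem) v hv
      exact this
    have hwS : w ∉ S := by
      intro hw
      exact hw0 (hδ0 w (hwker w hw))
    have hgood' : Good (insert w S) := by
      constructor
      · intro h0
        rcases Finset.mem_insert.mp h0 with h0 | h0
        · exact hw0 h0.symm
        · exact hGoodS.1 h0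
      · intro a ha b hb hab
        rcases Finset.mem_insert.mp ha with ha' | ha' <;>
          rcases Finset.mem_insert.mp hb with hb' | hb'
        · exact absurd (ha'.trans hb'.symm) hab
        · subst ha'; exact hsymm0 _ _ (hwker b hb')
        · subst hb'; exact hwker a ha'
        · exact hGoodS.2 a ha' b hb' hab
    have := hmax _ hgood'
    rw [Finset.card_insert_of_notMem hwS] at this
    omega
  -- sum of ranks equals 2p
  have hsum_ge : 2 * p ≤ ∑ v ∈ S, finrank ℝ ↥(range (G β v)) := by
    have := finrank_le_sum_inf_ker S (fun v => G β v)
    rw [hKbot] at this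
    simpa [hV] using this
  have hsum : ∑ v ∈ S, finrank ℝ ↥(range (G β v)) = 2 * p :=
    le_antisymm (hboundsum S hGoodS) hsum_ge
  -- pick v₁
  have hSne : S.Nonempty := by
    rw [← Finset.card_pos]
    omega
  obtain ⟨v₁, hv₁S⟩ := hSne
  have hv₁0 : v₁ ≠ 0 := fun h => hGoodS.1 (h ▸ hv₁S)
  set S' : Finset V := S.erase v₁ with hS'def
  set r₁ : ℕ := finrank ℝ ↥(range (G β v₁)) with hr₁def
  have hr₁le : r₁ ≤ 2 * p := by
    rw [hr₁def]
    calc finrank ℝ ↥(range (G β v₁)) ≤ finrank ℝ (WithLp 2 (U × U)) := Submodule.finrank_le _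
      _ = 2 * p := hE
  have hsum' : ∑ v ∈ S', finrank ℝ ↥(range (G β v)) + r₁ = 2 * p := by
    rw [hr₁def, hS'def, Finset.sum_erase_add S _ hv₁S, hsum]
  -- V₁ and W₁
  set V₁ : Submodule ℝ V := S'.inf fun w => ker (G β w) with hV₁def
  have hmemV₁ : ∀ y : V, y ∈ V₁ ↔ ∀ w ∈ S', G β w y = 0 := by
    intro y
    rw [hV₁def]
    constructor
    · intro h w hw
      exact (Submodule.mem_finsetInf.mp h) w hw
    · intro h
      rw [Submodule.mem_finsetInf]
      intro w hw
      exact h w hw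
  have hv₁V₁ : v₁ ∈ V₁ := by
    rw [hmemV₁]
    intro w hw
    exact hGoodS.2 w (Finset.mem_of_mem_erase hw) v₁ hv₁S (Finset.ne_of_mem_erase hw)
  have hV₁ge : r₁ ≤ finrank ℝ ↥V₁ := by
    have := finrank_le_sum_inf_ker S' (fun v => G β v)
    rw [← hV₁def] at this
    rw [hV] at this
    omega
  set WS : Submodule ℝ (WithLp 2 (U × U)) := S'.sup fun w => range (G β w) with hWSdef
  have hWSrank : finrank ℝ ↥WS + r₁ = 2 * p := by
    rw [hWSdef, ← sum_finrank_of_orth S' _ ?_]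
    · exact hsum'
    · intro v hv w hw hvw
      exact horthR S hGoodS v (Finset.mem_of_mem_erase hv) w (Finset.mem_of_mem_erase hw) hvw
  set W₁ : Submodule ℝ (WithLp 2 (U × U)) := WSᗮ with hW₁def
  have hW₁rank : finrank ℝ ↥W₁ = r₁ := by
    have := Submodule.finrank_add_finrank_orthogonal (K := WS)
    rw [hE] at this
    rw [hW₁def]
    omega
  have hrangeV₁ : ∀ y : V, y ∈ V₁ → range (G β y) ≤ W₁ := by
    intro y hy
    have hWSle : WS ≤ (range (G β y))ᗮ := by
      rw [hWSdef]
      refine Finset.sup_le fun w hw => ?_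
      rintro x ⟨T, rfl⟩
      rw [Submodule.mem_orthogonal]
      rintro u ⟨T', rfl⟩
      have hGyw : G β y w = 0 := hsymm0 w y ((hmemV₁ y).mp hy w hw)
      exact horthG y w hGyw T' T
    rintro x ⟨T, rfl⟩
    rw [hW₁def, Submodule.mem_orthogonal]
    intro u hu
    have : u ∈ (range (G β y))ᗮ := hWSle hu
    rw [Submodule.mem_orthogonal] at this
    rw [real_inner_comm]
    exact this _ ⟨T, rfl⟩
  -- key dichotomy: no degenerate pairs within V₁
  have hB' : ∀ x : V, x ∈ V₁ → x ≠ 0 → ∀ y : V, y ∈ V₁ → G β x y = 0 → y = 0 := by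
    intro x hx hx0 y hy hxy
    by_contra hy0
    have hself : ∀ z : V, z ∈ V₁ → z ∈ S' → False := by
      intro z hz hzS'
      have : G β z z = 0 := (hmemV₁ z).mp hz z hzS'
      have hz0 : z = 0 := hδ0 z this
      exact hGoodS.1 (hz0 ▸ Finset.mem_of_mem_erase hzS')
    have hxy' : x ≠ y := by
      intro h
      subst h
      exact hx0 (hδ0 x hxy)
    have hxS' : x ∉ S' := fun h => hself x hx h
    have hyS' : y ∉ S' := fun h => hself y hy h
    have hxiyS' : x ∉ insert y S' := by
      intro h
      rcases Finset.mem_insert.mp h with h | h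
      · exact hxy' h
      · exact hxS' h
    have hgood'' : Good (insert x (insert y S')) := by
      constructor
      · intro h0
        rcases Finset.mem_insert.mp h0 with h0 | h0
        · exact hx0 h0.symm
        rcases Finset.mem_insert.mp h0 with h0 | h0
        · exact hy0 h0.symm
        · exact hGoodS.1 (Finset.mem_of_mem_erase h0)
      · have hmemcase : ∀ a ∈ insert x (insert y S'), a = x ∨ a = y ∨ a ∈ S' := by
          intro a ha
          rcases Finset.mem_insert.mp ha with h | h
          · exact Or.inl h
          rcases Finset.mem_insert.mp h with h | h
          · exact Or.inr (Or.inl h)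
          · exact Or.inr (Or.inr h)
        intro a ha b hb hab
        have hVpair : ∀ c : V, c ∈ V₁ → ∀ d ∈ S', G β c d = 0 ∧ G β d c = 0 := by
          intro c hc d hd
          have h1 : G β d c = 0 := (hmemV₁ c).mp hc d hd
          exact ⟨hsymm0 d c h1, h1⟩
        rcases hmemcase a ha with ha' | ha' | ha' <;> rcases hmemcase b hb with hb' | hb' | hb'
        · exact absurd (ha'.trans hb'.symm) hab
        · rw [ha', hb']; exact hxy
        · rw [ha']; exact (hVpair x hx b hb').1
        · rw [ha', hb']; exact hsymm0 x y hxy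
        · exact absurd (ha'.trans hb'.symm) hab
        · rw [ha']; exact (hVpair y hy b hb').1
        · rw [hb']; exact (hVpair x hx a ha').2
        · rw [hb']; exact (hVpair y hy a ha').2
        · exact hGoodS.2 a (Finset.mem_of_mem_erase ha') b (Finset.mem_of_mem_erase hb') hab
    have hcard'' := hmax _ hgood''
    rw [Finset.card_insert_of_notMem hxiyS', Finset.card_insert_of_notMem hyS'] at hcard''
    have hScard : S.card = S'.card + 1 := by
      rw [hS'def]
      rw [Finset.card_erase_of_mem hv₁S]
      have : 1 ≤ S.card := Finset.card_pos.mpr ⟨v₁, hv₁S⟩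
      omega
    omega
  -- dimension of V₁ equals r₁
  have hV₁le : finrank ℝ ↥V₁ ≤ r₁ := by
    have hinj : ker ((G β v₁).domRestrict V₁) = ⊥ := by
      refine (Submodule.eq_bot_iff _).mpr fun y hy => ?_
      have : G β v₁ (y : V) = 0 := hy
      have := hB' v₁ hv₁V₁ hv₁0 (y : V) y.2 this
      exact Subtype.ext this
    have h1 := LinearMap.finrank_range_add_finrank_ker ((G β v₁).domRestrict V₁)
    rw [hinj, finrank_bot, add_zero] at h1
    have h2 : finrank ℝ ↥(range ((G β v₁).domRestrict V₁)) ≤ r₁ := by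
      rw [hr₁def]
      apply Submodule.finrank_mono
      rintro x ⟨y, rfl⟩
      exact ⟨(y : V), rfl⟩
    omega
  have hV₁r : finrank ℝ ↥V₁ = r₁ := le_antisymm hV₁le hV₁ge
  -- J-stability of V₁
  have hJV₁ : ∀ y ∈ V₁, J y ∈ V₁ := by
    intro y hy
    rw [hmemV₁]
    intro w hw
    rw [hJright, (hmemV₁ y).mp hy w hw, map_zero]
  -- jW-stability of W₁
  have hjWrange : ∀ w : V, Submodule.map jW (range (G β w)) ≤ range (G β w) := by
    rintro w x ⟨y, ⟨T, rfl⟩, rfl⟩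
    exact ⟨J T, hJright w T⟩
  have hjWWS : ∀ x ∈ WS, jW x ∈ WS := by
    have hmap : Submodule.map jW WS ≤ WS := by
      rw [hWSdef, Finset.sup_eq_iSup]
      simp_rw [Submodule.map_iSup (ι := V), Submodule.map_iSup (ι := _ ∈ S')]
      refine iSup_mono fun w => iSup_mono fun hw => hjWrange w
    intro x hx
    exact hmap ⟨x, hx, rfl⟩
  have hjWW₁ : ∀ x ∈ W₁, jW x ∈ W₁ := by
    intro x hx
    rw [hW₁def, Submodule.mem_orthogonal]
    intro u hu
    have hu' : -(jW u) ∈ WS := neg_mem (hjWWS u hu)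
    have hueq : jW (-(jW u)) = u := by rw [map_neg, jW_jW, neg_neg]
    have hx' : ∀ z ∈ WS, ⟪z, x⟫ = 0 := (Submodule.mem_orthogonal _ _).mp (hW₁def ▸ hx)
    calc ⟪u, jW x⟫ = ⟪jW (-(jW u)), jW x⟫ := by rw [hueq]
      _ = ⟪-(jW u), x⟫ := jW_inner _ _
      _ = 0 := hx' _ hu'
  -- dimension of V₁ is at most 2 : otherwise eigenvector contradiction
  have hle2 : finrank ℝ ↥V₁ ≤ 2 := by
    by_contra hgt
    push_neg at hgt
    have h5 : 3 ≤ finrank ℝ ↥V₁ := hgt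
    set jV : ↥V₁ →ₗ[ℝ] ↥V₁ := J.restrict hJV₁ with hjV
    have hjVj : ∀ y : ↥V₁, jV (jV y) = -y := by
      intro y
      apply Subtype.ext
      show J (J (y : V)) = -(y : V)
      exact hJ _
    set jE : ↥W₁ →ₗ[ℝ] ↥W₁ := -(jW.restrict hjWW₁) with hjE
    have hmemW₁ : ∀ (x : ↥V₁) (y : V), G β (x : V) y ∈ W₁ :=
      fun x y => hrangeV₁ (x : V) x.2 ⟨y, rfl⟩
    set F' : ↥V₁ →ₗ[ℝ] ↥V₁ →ₗ[ℝ] ↥W₁ :=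
      { toFun := fun x =>
          { toFun := fun y => ⟨G β (x : V) (y : V), hmemW₁ x (y : V)⟩
            map_add' := fun y z => Subtype.ext (by
              show G β (x : V) ((y : V) + (z : V)) = G β (x : V) (y : V) + G β (x : V) (z : V)
              exact map_add _ _ _)
            map_smul' := fun c y => Subtype.ext (by
              show G β (x : V) (c • (y : V)) = c • G β (x : V) (y : V)
              exact map_smul _ _ _) }
        map_add' := fun x z => LinearMap.ext fun y => Subtype.ext (by
          show G β ((x : V) + (z : V)) (y : V) = G β (x : V) (y : V) + G β (z : V) (y : V)
          rw [map_add, LinearMap.add_apply])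
        map_smul' := fun c x => LinearMap.ext fun y => Subtype.ext (by
          show G β (c • (x : V)) (y : V) = c • G β (x : V) (y : V)
          rw [map_smul, LinearMap.smul_apply]) } with hF'
    have hF'app : ∀ (x y : ↥V₁), ((F' x y : ↥W₁) : WithLp 2 (U × U)) = G β (x : V) (y : V) :=
      fun x y => rfl
    refine eig_contra jV hjVj jE F' ?_ ?_ ?_ ?_ h5
    · intro x y
      apply Subtype.ext
      rw [hF'app]
      show G β (x : V) (J (y : V)) = ((-(jE (F' x y)) : ↥W₁) : WithLp 2 (U × U))
      have : ((-(jE (F' x y)) : ↥W₁) : WithLp 2 (U × U)) = jW (G β (x : V) (y : V)) := by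
        rw [hjE]
        simp only [neg_neg, LinearMap.neg_apply]
        rfl
      rw [this]
      exact hJright _ _
    · intro x y
      apply Subtype.ext
      rw [hF'app]
      show G β (J (x : V)) (y : V) = ((jE (F' x y) : ↥W₁) : WithLp 2 (U × U))
      have : ((jE (F' x y) : ↥W₁) : WithLp 2 (U × U)) = -jW (G β (x : V) (y : V)) := by
        rw [hjE]
        simp only [LinearMap.neg_apply]
        rfl
      rw [this]
      exact hJleft _ _
    · intro x hx y hy
      have hx0 : (x : V) ≠ 0 := fun h => hx (Subtype.ext h)
      have hGxy : G β (x : V) (y : V) = 0 := by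
        have := congrArg (fun z : ↥W₁ => (z : WithLp 2 (U × U))) hy
        simpa [hF'app] using this
      exact Subtype.ext (hB' (x : V) x.2 hx0 (y : V) y.2 hGxy)
    · rw [hW₁rank, hV₁r]
  -- dimension of V₁ is not 1
  have hge1 : 1 ≤ r₁ := hrank1 v₁ hv₁0
  have hne1 : finrank ℝ ↥V₁ ≠ 1 := by
    intro h1
    have hspanle : Submodule.span ℝ {v₁} ≤ V₁ := by
      rw [Submodule.span_le, Set.singleton_subset_iff]
      exact hv₁V₁
    have hspan1 : finrank ℝ ↥(Submodule.span ℝ {v₁}) = 1 := finrank_span_singleton hv₁0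
    have heq : Submodule.span ℝ {v₁} = V₁ :=
      Submodule.eq_of_le_of_finrank_le hspanle (by omega)
    have hJmem : J v₁ ∈ Submodule.span ℝ ({v₁} : Set V) := by
      rw [heq]
      exact hJV₁ v₁ hv₁V₁
    obtain ⟨c, hc⟩ := Submodule.mem_span_singleton.mp hJmem
    have hJJ : J (J v₁) = (c * c) • v₁ := by
      rw [← hc, map_smul, ← hc, smul_smul]
    rw [hJ] at hJJ
    have : (c * c + 1) • v₁ = 0 := by
      rw [add_smul, one_smul, ← hJJ]
      abel
    rcases smul_eq_zero.mp this with h | h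
    · nlinarith [sq_nonneg c, h]
    · exact hv₁0 h
  have hr₁2 : r₁ = 2 := by omega
  -- conclude
  refine ⟨v₁, ?_⟩
  have hkereq : LinearMap.ker (β v₁) = LinearMap.ker (G β v₁) := by
    ext x
    simp only [LinearMap.mem_ker]
    exact ((G_eq_zero_iff β v₁ x).trans Iff.rfl).symm
  have hrn := LinearMap.finrank_range_add_finrank_ker (G β v₁)
  rw [hV] at hrn
  rw [hkereq]
  omega
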